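/- Every Papadakis–Webster integer F has all of its decimal digits in the set {0, 1, 8, 9}. -/

import Mathlib

/-- Digital reversal of a natural number (in base 10). -/
def rev (D : ℕ) : ℕ := Nat.ofDigits 10 ((Nat.digits 10 D).reverse)

/-- `F` is a Papadakis–Webster integer: `F = E + rev E` where `E = D - rev D`,
for some positive `D` with `D > rev D` such that `E` has the same number of
decimal digits as `D`. -/
def IsPWI (F : ℕ) : Prop :=
  ∃ D : ℕ, 0 < D ∧ rev D < D ∧
    (Nat.digits 10 (D - rev D)).length = (Nat.digits 10 D).length ∧
    F = (D - rev D) + rev (D - rev D)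

section PWIaux

open Finset

/-- low digit split -/
lemma modsplit (N i : ℕ) : N % 10^(i+1) = N % 10^i + 10^i * (N / 10^i % 10) := by
  rw [pow_succ, Nat.mod_mul]

/-- reversal as explicit sum -/
lemma rev_eq_sum : ∀ N : ℕ,
    Nat.ofDigits 10 ((Nat.digits 10 N).reverse) =
      ∑ i ∈ range (Nat.digits 10 N).length,
        (N / 10^i % 10) * 10^((Nat.digits 10 N).length - 1 - i) := by
  intro N
  induction N using Nat.strong_induction_on with
  | _ N ih =>
    rcases Nat.eq_zero_or_pos N with h0 | h0
    · simp [h0]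
    have hd : Nat.digits 10 N = N % 10 :: Nat.digits 10 (N / 10) :=
      Nat.digits_def' (by norm_num) h0
    have hlen : (Nat.digits 10 N).length = (Nat.digits 10 (N / 10)).length + 1 := by
      rw [hd]; simp
    have hrec := ih (N / 10) (Nat.div_lt_self h0 (by norm_num))
    set L := (Nat.digits 10 (N / 10)).length with hL
    rw [hd]
    simp only [List.reverse_cons]
    rw [Nat.ofDigits_append, hrec]
    simp only [List.length_cons, List.length_reverse, ← hL]
    rw [Finset.sum_range_succ' (fun i => N / 10^i % 10 * 10^(L + 1 - 1 - i)) L]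
    simp only [pow_zero, Nat.div_one]
    have h1 : ∀ i, N / 10 / 10^i = N / 10^(i+1) := by
      intro i; rw [Nat.div_div_eq_div_mul, ← pow_succ']
    have h2 : ∀ i : ℕ, L - 1 - i = L + 1 - 1 - (i + 1) := by omega
    rw [Nat.ofDigits_singleton]
    congr 1
    · refine Finset.sum_congr rfl fun i _ => ?_
      rw [h1, h2]
    · have h3 : L + 1 - 1 - 0 = L := by omega
      rw [h3]; ring

/-- digit extraction from an explicit expansion with digits ≤ 9 -/
lemma digit_of_sum : ∀ (i k : ℕ) (c : ℕ → ℕ), (∀ j, c j ≤ 9) → i < k →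
    (∑ j ∈ range k, c j * 10^j) / 10^i % 10 = c i := by
  intro i
  induction i with
  | zero =>
    intro k c hc hik
    obtain ⟨m, rfl⟩ : ∃ m, k = m + 1 := ⟨k - 1, by omega⟩
    rw [Finset.sum_range_succ' (fun j => c j * 10^j) m]
    simp only [pow_zero, Nat.div_one, mul_one]
    have : ∑ j ∈ range m, c (j+1) * 10^(j+1) = 10 * ∑ j ∈ range m, c (j+1) * 10^j := by
      rw [Finset.mul_sum]; refine Finset.sum_congr rfl fun j _ => by ring
    rw [this, add_comm, Nat.add_mul_mod_self_left, Nat.mod_eq_of_lt (by have := hc 0; omega)]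
  | succ i ih =>
    intro k c hc hik
    obtain ⟨m, rfl⟩ : ∃ m, k = m + 1 := ⟨k - 1, by omega⟩
    rw [Finset.sum_range_succ' (fun j => c j * 10^j) m]
    have h10 : ∑ j ∈ range m, c (j+1) * 10^(j+1) = 10 * ∑ j ∈ range m, c (j+1) * 10^j := by
      rw [Finset.mul_sum]; refine Finset.sum_congr rfl fun j _ => by ring
    simp only [pow_zero, mul_one, h10]
    have hdiv : (10 * ∑ j ∈ range m, c (j+1) * 10^j + c 0) / 10^(i+1)
        = (∑ j ∈ range m, c (j+1) * 10^j) / 10^i := by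
      rw [pow_succ', ← Nat.div_div_eq_div_mul]
      congr 1
      rw [add_comm, Nat.add_mul_div_left _ _ (by norm_num : (0:ℕ) < 10),
        Nat.div_eq_of_lt (by have := hc 0; omega), zero_add]
    rw [hdiv, ih m (fun j => c (j+1)) (fun j => hc (j+1)) (by omega)]

/-- subtraction borrow formula, in ℤ -/
lemma sub_mod_eq (A B p : ℕ) (hB : B ≤ A) (hp : 0 < p) :
    ((A - B : ℕ) : ℤ) % p
      = (A % p : ℕ) - (B % p : ℕ) + (if A % p < B % p then (p:ℤ) else 0) := by
  have hcast : ((A - B : ℕ) : ℤ) = (A:ℤ) - B := by push_cast [hB]; ring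
  have hAp : ((A % p : ℕ) : ℤ) = (A:ℤ) % p := by push_cast; ring
  have hBp : ((B % p : ℕ) : ℤ) = (B:ℤ) % p := by push_cast; ring
  set x : ℤ := (A % p : ℕ) - (B % p : ℕ) + (if A % p < B % p then (p:ℤ) else 0) with hx
  have hA1 : A % p < p := Nat.mod_lt _ hp
  have hB1 : B % p < p := Nat.mod_lt _ hp
  have hx0 : 0 ≤ x := by
    rw [hx]; split_ifs with h
    · push_cast; omega
    · push_cast; omega
  have hxp : x < p := by
    rw [hx]; split_ifs with h
    · push_cast; omega
    · push_cast; omega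
  have key : ((A:ℤ) - B) % p = x % p := by
    rw [Int.sub_emod, ← hAp, ← hBp, hx]
    split_ifs with h
    · rw [show ((A % p : ℕ) - (B % p : ℕ) + (p:ℤ)) = (A % p : ℕ) - (B % p : ℕ) + (p:ℤ) * 1 by
        ring, Int.add_mul_emod_self_left]
    · rw [add_zero]
  rw [hcast, key, Int.emod_eq_of_lt hx0 hxp]

/-- a sum of 0/1 digits has all digits ≤ 1 -/
lemma digits01 : ∀ (k : ℕ) (u : ℕ → ℕ), (∀ i, u i ≤ 1) →
    ∀ d ∈ Nat.digits 10 (∑ i ∈ range k, u i * 10^i), d ≤ 1 := by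
  intro k
  induction k with
  | zero => simp
  | succ m ih =>
    intro u hu d hd
    rw [Finset.sum_range_succ' (fun i => u i * 10^i) m] at hd
    have h10 : ∑ j ∈ range m, u (j+1) * 10^(j+1) = 10 * ∑ j ∈ range m, u (j+1) * 10^j := by
      rw [Finset.mul_sum]; refine Finset.sum_congr rfl fun j _ => by ring
    simp only [pow_zero, mul_one, h10] at hd
    set X := ∑ j ∈ range m, u (j+1) * 10^j with hX
    rcases Nat.eq_zero_or_pos (10 * X + u 0) with h0 | h0
    · rw [h0] at hd; simp at hd
    rw [Nat.digits_def' (by norm_num : (1:ℕ) < 10) h0] at hd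
    rcases List.mem_cons.mp hd with hd | hd
    · have h1 : (10 * X + u 0) % 10 = u 0 := by
        rw [add_comm, Nat.add_mul_mod_self_left, Nat.mod_eq_of_lt (by have := hu 0; omega)]
      rw [h1] at hd; subst hd; exact hu 0
    · have h2 : (10 * X + u 0) / 10 = X := by
        rw [add_comm, Nat.add_mul_div_left _ _ (by norm_num : (0:ℕ) < 10),
          Nat.div_eq_of_lt (by have := hu 0; omega), zero_add]
      rw [h2] at hd
      exact ih (fun j => u (j+1)) (fun j => hu (j+1)) d hd

/-- 99 times a 0/1-digit number (plus small carry) has digits in {0,1,8,9} -/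
lemma mul99 : ∀ (M : ℕ), (∀ d ∈ Nat.digits 10 M, d ≤ 1) →
    ∀ c, (c = 0 ∨ c = 1 ∨ c = 9 ∨ c = 10) →
    ∀ d ∈ Nat.digits 10 (99 * M + c), d = 0 ∨ d = 1 ∨ d = 8 ∨ d = 9 := by
  intro M
  induction M using Nat.strong_induction_on with
  | _ M ih =>
    intro hM c hc d hd
    rcases Nat.eq_zero_or_pos M with h0 | h0
    · subst h0
      rcases hc with rfl | rfl | rfl | rfl <;> simp at hd <;> tauto
    have hdig : Nat.digits 10 M = M % 10 :: Nat.digits 10 (M / 10) :=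
      Nat.digits_def' (by norm_num) h0
    have hr : M % 10 ≤ 1 := hM _ (by rw [hdig]; exact List.mem_cons_self)
    have hq : ∀ d ∈ Nat.digits 10 (M / 10), d ≤ 1 := fun d hd =>
      hM d (by rw [hdig]; exact List.mem_cons_of_mem _ hd)
    set q := M / 10 with hqdef
    set r := M % 10 with hrdef
    set w := 99 * r + c with hw
    have hMqr : M = 10 * q + r := by rw [hqdef, hrdef]; omega
    have hN : 99 * M + c = 10 * (99 * q) + w := by rw [hMqr, hw]; ring
    have hwvals : w = 0 ∨ w = 1 ∨ w = 9 ∨ w = 10 ∨ w = 99 ∨ w = 100 ∨ w = 108 ∨ w = 109 := by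
      interval_cases r <;> rcases hc with rfl | rfl | rfl | rfl <;> simp [hw] <;> omega
    rcases Nat.eq_zero_or_pos (99 * M + c) with hz | hz
    · rw [hz] at hd; simp at hd
    rw [Nat.digits_def' (by norm_num : (1:ℕ) < 10) hz] at hd
    have hmod : (99 * M + c) % 10 = w % 10 := by rw [hN]; omega
    have hdivN : (99 * M + c) / 10 = 99 * q + w / 10 := by rw [hN]; omega
    rcases List.mem_cons.mp hd with hd | hd
    · rw [hmod] at hd
      rcases hwvals with h|h|h|h|h|h|h|h <;> omega
    · rw [hdivN] at hd
      have hq' : q < M := Nat.div_lt_self h0 (by norm_num)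
      refine ih q hq' hq (w / 10) ?_ d hd
      rcases hwvals with h|h|h|h|h|h|h|h <;> omega

/-- i-th decimal digit -/
def dig (N i : ℕ) : ℕ := N / 10^i % 10

/-- borrow indicator for the subtraction A - B at position i -/
def bor (A B i : ℕ) : ℕ := if A % 10^i < B % 10^i then 1 else 0

lemma dig_le (N i : ℕ) : dig N i ≤ 9 :=
  Nat.le_of_lt_succ (Nat.mod_lt _ (by norm_num))

lemma bor_le (A B i : ℕ) : bor A B i ≤ 1 := by
  unfold bor; split_ifs <;> omega

lemma split_cast (N i : ℕ) :
    ((N % 10^(i+1) : ℕ) : ℤ) = ((N % 10^i : ℕ) : ℤ) + (dig N i : ℤ) * (10:ℤ)^i := by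
  have h := modsplit N i
  rw [h]; unfold dig; push_cast; ring

lemma borrow (A B : ℕ) (h : B ≤ A) (i : ℕ) :
    (((A - B) % 10^i : ℕ) : ℤ)
      = ((A % 10^i : ℕ) : ℤ) - ((B % 10^i : ℕ) : ℤ) + (bor A B i : ℤ) * (10:ℤ)^i := by
  have hp : 0 < 10^i := pow_pos (by norm_num) i
  have hh := sub_mod_eq A B (10^i) h hp
  have hcast : (((A - B) % 10^i : ℕ) : ℤ) = ((A - B : ℕ) : ℤ) % ((10^i : ℕ) : ℤ) := by
    norm_cast
  rw [hcast, hh]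
  unfold bor
  split_ifs with hcomp <;> push_cast <;> ring

lemma dig_key (A B : ℕ) (h : B ≤ A) (i : ℕ) :
    ((dig (A - B) i : ℕ) : ℤ)
      = (dig A i : ℤ) - (dig B i : ℤ) + 10 * (bor A B (i+1) : ℤ) - (bor A B i : ℤ) := by
  have hc : ((10:ℤ)^i) ≠ 0 := pow_ne_zero i (by norm_num)
  refine mul_right_cancel₀ hc ?_
  have e1 := split_cast (A - B) i
  have e2 := split_cast A i
  have e3 := split_cast B i
  have p1 := borrow A B h i
  have p2 := borrow A B h (i+1)
  linear_combination -e1 + e2 - e3 + p2 - p1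


lemma main_identity (D : ℕ) (hD0 : 0 < D) (hlt : rev D < D)
    (hlen : (Nat.digits 10 (D - rev D)).length = (Nat.digits 10 D).length) :
    ∃ S : ℕ, (∀ d ∈ Nat.digits 10 S, d ≤ 1) ∧
      (D - rev D) + rev (D - rev D) = 99 * S := by
  set R := rev D with hR
  set E := D - R with hEdef
  have hle : R ≤ D := hlt.le
  -- lengths
  have hL1 : 0 < (Nat.digits 10 D).length := by
    rw [List.length_pos_iff]
    exact Nat.digits_ne_nil_iff_ne_zero.mpr hD0.ne'
  set n := (Nat.digits 10 D).length - 1 with hn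
  have hLn : (Nat.digits 10 D).length = n + 1 := by omega
  have hElen : (Nat.digits 10 E).length = n + 1 := by rw [hlen, hLn]
  have hDlt : D < 10^(n+1) := by
    rw [← hLn]; exact Nat.lt_base_pow_length_digits (by norm_num)
  have hElt : E < 10^(n+1) := by
    rw [← hElen]; exact Nat.lt_base_pow_length_digits (by norm_num)
  -- borrow endpoint values
  have ht0 : bor D R 0 = 0 := by
    unfold bor; simp [Nat.mod_one]
  have htn1 : bor D R (n+1) = 0 := by
    unfold bor
    rw [Nat.mod_eq_of_lt hDlt, Nat.mod_eq_of_lt (lt_of_le_of_lt hle hDlt)]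
    simp [not_lt.mpr hle]
  -- reversal of D as a digit expansion
  have hrevD : R = ∑ j ∈ range (n+1), dig D (n-j) * 10^j := by
    have h := rev_eq_sum D
    rw [← Finset.sum_range_reflect (fun j => dig D (n-j) * 10^j) (n+1)]
    rw [hR, rev, h, hLn]
    refine Finset.sum_congr rfl fun i hi => ?_
    have hi' : i ≤ n := by simp [Nat.lt_succ_iff] at hi; exact hi
    simp only [Nat.add_sub_cancel, dig]
    rw [Nat.sub_sub_self hi']
  -- digits of R are the reversed digits of D
  have hba : ∀ i, i ≤ n → dig R i = dig D (n-i) := by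
    intro i hi
    have := digit_of_sum i (n+1) (fun j => dig D (n-j)) (fun j => dig_le D (n-j))
      (by omega)
    unfold dig
    rw [hrevD]
    exact this
  -- the key per-digit identity for E
  have key : ∀ i, i ≤ n → ((dig E i : ℕ) : ℤ)
      = (dig D i : ℤ) - (dig D (n-i) : ℤ) + 10 * (bor D R (i+1) : ℤ) - (bor D R i : ℤ) := by
    intro i hi
    have h := dig_key D R hle i
    rw [hba i hi] at h
    exact h
  -- E as a digit sum (over ℤ)
  have hEsum : (E : ℤ) = ∑ i ∈ range (n+1), (dig E i : ℤ) * (10:ℤ)^i := by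
    have h := Finset.sum_range_sub (fun i => ((E % 10^i : ℕ) : ℤ)) (n+1)
    have hterm : ∀ i, ((E % 10^(i+1) : ℕ) : ℤ) - ((E % 10^i : ℕ) : ℤ)
        = (dig E i : ℤ) * (10:ℤ)^i := fun i => by rw [split_cast E i]; ring
    calc (E:ℤ) = ((E % 10^(n+1) : ℕ) : ℤ) - ((E % 10^0 : ℕ) : ℤ) := by
          rw [Nat.mod_eq_of_lt hElt]; simp
      _ = ∑ i ∈ range (n+1), (dig E i : ℤ) * (10:ℤ)^i := by
          rw [← h]; exact (Finset.sum_congr rfl fun i _ => (hterm i).symm).symm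
  -- rev E as a sum
  have hrevE_nat : rev E = ∑ i ∈ range (n+1), dig E (n-i) * 10^i := by
    have h := rev_eq_sum E
    rw [rev, h, hElen]
    rw [← Finset.sum_range_reflect (fun i => dig E (n-i) * 10^i) (n+1)]
    refine Finset.sum_congr rfl fun i hi => ?_
    have hi' : i ≤ n := by simp [Nat.lt_succ_iff] at hi; exact hi
    simp only [Nat.add_sub_cancel, dig]
    rw [Nat.sub_sub_self hi']
  have hrevE : (rev E : ℤ) = ∑ i ∈ range (n+1), (dig E (n-i) : ℤ) * (10:ℤ)^i := by
    rw [hrevE_nat]; push_cast; rfl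
  -- define S
  refine ⟨∑ i ∈ range (n+1), bor D R (n-i) * 10^i, ?_, ?_⟩
  · exact digits01 (n+1) (fun i => bor D R (n-i)) (fun i => bor_le D R (n-i))
  set S : ℕ := ∑ i ∈ range (n+1), bor D R (n-i) * 10^i with hS
  -- final computation over ℤ
  have hcast : ((E + rev E : ℕ) : ℤ) = ((99 * S : ℕ) : ℤ) := by
    push_cast
    rw [hEsum, hrevE, ← Finset.sum_add_distrib]
    have hterm : ∀ i ∈ range (n+1),
        (dig E i : ℤ) * (10:ℤ)^i + (dig E (n-i) : ℤ) * (10:ℤ)^i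
        = ((bor D R (i+1) : ℤ) * (10:ℤ)^(i+1) - (bor D R i : ℤ) * (10:ℤ)^i)
          + ((bor D R ((n-i)+1) : ℤ) * (10:ℤ)^(i+1) - (bor D R (n-i) : ℤ) * (10:ℤ)^i) := by
      intro i hi
      have hi' : i ≤ n := by simp [Nat.lt_succ_iff] at hi; exact hi
      have k1 := key i hi'
      have k2 := key (n-i) (by omega)
      rw [Nat.sub_sub_self hi'] at k2
      rw [k1, k2]; ring
    rw [Finset.sum_congr rfl hterm, Finset.sum_add_distrib]
    have hfirst : ∑ i ∈ range (n+1),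
        ((bor D R (i+1) : ℤ) * (10:ℤ)^(i+1) - (bor D R i : ℤ) * (10:ℤ)^i) = 0 := by
      rw [Finset.sum_range_sub (fun i => (bor D R i : ℤ) * (10:ℤ)^i) (n+1)]
      rw [ht0, htn1]; simp
    have hSZ : (S : ℤ) = ∑ i ∈ range (n+1), (bor D R (n-i) : ℤ) * (10:ℤ)^i := by
      rw [hS]; push_cast; rfl
    have hsecond : ∑ i ∈ range (n+1),
        ((bor D R ((n-i)+1) : ℤ) * (10:ℤ)^(i+1) - (bor D R (n-i) : ℤ) * (10:ℤ)^i)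
        = 100 * (S:ℤ) - (S:ℤ) := by
      rw [Finset.sum_sub_distrib, ← hSZ]
      congr 1
      rw [Finset.sum_range_succ' (fun i => (bor D R ((n-i)+1) : ℤ) * (10:ℤ)^(i+1)) n]
      have hg0 : (bor D R ((n-0)+1) : ℤ) * (10:ℤ)^(0+1) = 0 := by
        rw [Nat.sub_zero, htn1]; simp
      rw [hg0, add_zero]
      have hstep : ∀ i ∈ range n, (bor D R ((n-(i+1))+1) : ℤ) * (10:ℤ)^((i+1)+1)
          = 100 * ((bor D R (n-i) : ℤ) * (10:ℤ)^i) := by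
        intro i hi
        have hi' : i < n := by simpa using hi
        have heq : (n-(i+1))+1 = n-i := by omega
        rw [heq]; ring
      rw [Finset.sum_congr rfl hstep, ← Finset.mul_sum]
      have hSsplit : (S:ℤ) = ∑ i ∈ range n, (bor D R (n-i) : ℤ) * (10:ℤ)^i := by
        rw [hSZ, Finset.sum_range_succ, Nat.sub_self, ht0]
        simp
      rw [← hSsplit]
    rw [hfirst, hsecond]; ring
  have hfin : E + rev E = 99 * S := Nat.cast_injective hcast
  exact hfin

end PWIaux

/-- every Papadakis–Webster integer has all of its decimal digits
in the set {0, 1, 8, 9}. -/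
theorem stmt3 (F : ℕ) (hF : IsPWI F) :
    ∀ d ∈ Nat.digits 10 F, d = 0 ∨ d = 1 ∨ d = 8 ∨ d = 9 := by
  obtain ⟨D, hD0, hlt, hlen, rfl⟩ := hF
  obtain ⟨S, hS1, hS2⟩ := main_identity D hD0 hlt hlen
  intro d hd
  rw [hS2] at hd
  exact mul99 S hS1 0 (Or.inl rfl) d (by rw [add_zero]; exact hd)
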